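/- (Asymptotic stability in Theorem 1.) Let x : [0,∞) → ℝ^N be a differentiable curve and e : [0,∞) → ℝ^m a continuous curve satisfying x'(t) = A x(t) + B e(t) for all t ≥ 0, where A is an N×N real matrix and B a nonzero N×m real matrix. Suppose P and Q are symmetric positive definite N×N real matrices with Aᵀ P + P A = −Q, and let λ_min(Q), λ_max(P) denote the smallest eigenvalue of Q and the largest eigenvalue of P. Fix σ ∈ (0,1) and assume the event-triggering mechanism enforces ‖e(t)‖² ≤ σ (λ_min(Q)²/(4 ‖Bᵀ Pᵀ P B‖)) ‖x(t)‖² for all t ≥ 0. Then V(x(t)) ≤ V(x(0)) · exp( −(1−σ) λ_min(Q) t / (2 λ_max(P)) ) for all t ≥ 0, where V(z) = zᵀ P z; in particular x(t) → 0 as t → ∞. -/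

import Mathlib

open Matrix Filter
open scoped RealInnerProductSpace

/-- Multiplication of a vector in Euclidean space by a real matrix. -/
noncomputable def matVec {a b : ℕ} (M : Matrix (Fin a) (Fin b) ℝ)
    (v : EuclideanSpace ℝ (Fin b)) : EuclideanSpace ℝ (Fin a) :=
  Matrix.toEuclideanLin M v

/-- The operator norm of a real matrix, induced by the Euclidean norms. -/
noncomputable def opNorm {a b : ℕ} (M : Matrix (Fin a) (Fin b) ℝ) : ℝ :=
  ‖LinearMap.toContinuousLinearMap (Matrix.toEuclideanLin M)‖

lemma matVec_mul {a b c : ℕ} (M : Matrix (Fin a) (Fin b) ℝ) (N : Matrix (Fin b) (Fin c) ℝ)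
    (v : EuclideanSpace ℝ (Fin c)) : matVec (M * N) v = matVec M (matVec N v) := by
  simp [matVec, Matrix.toEuclideanLin_apply, Matrix.mulVec_mulVec]

lemma matVec_add {a b : ℕ} (M : Matrix (Fin a) (Fin b) ℝ) (u v : EuclideanSpace ℝ (Fin b)) :
    matVec M (u + v) = matVec M u + matVec M v := by
  simp [matVec]

lemma transpose_eq_conjTranspose {a b : ℕ} (M : Matrix (Fin a) (Fin b) ℝ) : Mᵀ = Mᴴ := by
  ext i j; simp [Matrix.conjTranspose_apply]

lemma inner_matVec_transpose {a b : ℕ} (M : Matrix (Fin a) (Fin b) ℝ)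
    (u : EuclideanSpace ℝ (Fin a)) (v : EuclideanSpace ℝ (Fin b)) :
    ⟪matVec Mᵀ u, v⟫ = ⟪u, matVec M v⟫ := by
  rw [transpose_eq_conjTranspose]
  simp only [matVec, Matrix.toEuclideanLin_conjTranspose_eq_adjoint]
  exact LinearMap.adjoint_inner_left _ _ _

lemma norm_matVec_le {a b : ℕ} (M : Matrix (Fin a) (Fin b) ℝ) (v : EuclideanSpace ℝ (Fin b)) :
    ‖matVec M v‖ ≤ opNorm M * ‖v‖ :=
  (LinearMap.toContinuousLinearMap (Matrix.toEuclideanLin M)).le_opNorm v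

lemma opNorm_pos {a b : ℕ} {M : Matrix (Fin a) (Fin b) ℝ} (hM : M ≠ 0) : 0 < opNorm M := by
  rw [opNorm, norm_pos_iff]
  intro h
  apply hM
  have h2 : Matrix.toEuclideanLin M = 0 := by
    apply LinearMap.toContinuousLinearMap.injective
    simpa using h
  simpa using Matrix.toEuclideanLin.injective (by simpa using h2)

lemma matVec_eigenvectorBasis {n : ℕ} {M : Matrix (Fin n) (Fin n) ℝ} (hM : M.IsHermitian)
    (i : Fin n) :
    matVec M (hM.eigenvectorBasis i) = hM.eigenvalues i • hM.eigenvectorBasis i := by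
  have h := hM.mulVec_eigenvectorBasis i
  apply (WithLp.equiv 2 (Fin n → ℝ)).injective
  simp only [matVec, WithLp.equiv_apply, Matrix.piLp_ofLp_toEuclideanLin]
  ext j
  simpa using congrFun h j

lemma rayleigh_eq {n : ℕ} {M : Matrix (Fin n) (Fin n) ℝ} (hM : M.IsHermitian)
    (v : EuclideanSpace ℝ (Fin n)) :
    ⟪v, matVec M v⟫ = ∑ i, hM.eigenvalues i * ⟪v, hM.eigenvectorBasis i⟫ ^ 2 := by
  have hsym := (Matrix.isHermitian_iff_isSymmetric.1 hM)
  rw [show ⟪v, matVec M v⟫ = ⟪v, Matrix.toEuclideanLin M v⟫ from rfl,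
    ← hM.eigenvectorBasis.sum_inner_mul_inner v (Matrix.toEuclideanLin M v)]
  refine Finset.sum_congr rfl fun i _ => ?_
  have h : ⟪hM.eigenvectorBasis i, Matrix.toEuclideanLin M v⟫
      = hM.eigenvalues i * ⟪hM.eigenvectorBasis i, v⟫ := by
    rw [← hsym (hM.eigenvectorBasis i) v,
      show Matrix.toEuclideanLin M (hM.eigenvectorBasis i) = _ from matVec_eigenvectorBasis hM i,
      real_inner_smul_left]
  rw [h, real_inner_comm v (hM.eigenvectorBasis i)]
  ring

lemma norm_sq_eq_sum {n : ℕ} {M : Matrix (Fin n) (Fin n) ℝ} (hM : M.IsHermitian)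
    (v : EuclideanSpace ℝ (Fin n)) :
    ‖v‖ ^ 2 = ∑ i, ⟪v, hM.eigenvectorBasis i⟫ ^ 2 := by
  rw [← real_inner_self_eq_norm_sq, ← hM.eigenvectorBasis.sum_inner_mul_inner v v]
  refine Finset.sum_congr rfl fun i _ => ?_
  rw [real_inner_comm v (hM.eigenvectorBasis i)]; ring

lemma rayleigh_lower {n : ℕ} {M : Matrix (Fin n) (Fin n) ℝ} (hM : M.IsHermitian) {c : ℝ}
    (hc : ∀ i, c ≤ hM.eigenvalues i) (v : EuclideanSpace ℝ (Fin n)) :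
    c * ‖v‖ ^ 2 ≤ ⟪v, matVec M v⟫ := by
  rw [rayleigh_eq hM v, norm_sq_eq_sum hM v, Finset.mul_sum]
  exact Finset.sum_le_sum fun i _ => mul_le_mul_of_nonneg_right (hc i) (sq_nonneg _)

lemma rayleigh_upper {n : ℕ} {M : Matrix (Fin n) (Fin n) ℝ} (hM : M.IsHermitian) {c : ℝ}
    (hc : ∀ i, hM.eigenvalues i ≤ c) (v : EuclideanSpace ℝ (Fin n)) :
    ⟪v, matVec M v⟫ ≤ c * ‖v‖ ^ 2 := by
  rw [rayleigh_eq hM v, norm_sq_eq_sum hM v, Finset.mul_sum]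
  exact Finset.sum_le_sum fun i _ => mul_le_mul_of_nonneg_right (hc i) (sq_nonneg _)

/-- Asymptotic stability in Theorem 1: if the event-triggering mechanism enforces
`‖e(t)‖² ≤ σ (λ_min(Q)²/(4‖BᵀPᵀPB‖)) ‖x(t)‖²` for all `t ≥ 0` with `σ ∈ (0,1)`, then
`V(x(t)) ≤ V(x(0)) exp(-(1-σ) λ_min(Q) t / (2 λ_max(P)))` for all `t ≥ 0`, where
`V(z) = zᵀ P z`; in particular `x(t) → 0` as `t → ∞`. -/
theorem event_triggered_asymptotic_stability {N m : ℕ}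
    (A P Q : Matrix (Fin N) (Fin N) ℝ) (B : Matrix (Fin N) (Fin m) ℝ)
    (hB : B ≠ 0)
    (hP : P.PosDef) (hQ : Q.PosDef)
    (hLyap : Aᵀ * P + P * A = -Q)
    (lamQ : ℝ) (hlamQ : IsLeast (Set.range hQ.1.eigenvalues) lamQ)
    (lamP : ℝ) (hlamP : IsGreatest (Set.range hP.1.eigenvalues) lamP)
    (σ : ℝ) (hσ : σ ∈ Set.Ioo (0 : ℝ) 1)
    (x : ℝ → EuclideanSpace ℝ (Fin N)) (e : ℝ → EuclideanSpace ℝ (Fin m))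
    (he : Continuous e)
    (hx : ∀ t, 0 ≤ t → HasDerivAt x (matVec A (x t) + matVec B (e t)) t)
    (htrig : ∀ t, 0 ≤ t →
      ‖e t‖ ^ 2 ≤ σ * (lamQ ^ 2 / (4 * opNorm (Bᵀ * Pᵀ * P * B))) * ‖x t‖ ^ 2) :
    (∀ t, 0 ≤ t → ⟪x t, matVec P (x t)⟫ ≤
        ⟪x 0, matVec P (x 0)⟫ * Real.exp (-(1 - σ) * lamQ * t / (2 * lamP))) ∧
      Tendsto x atTop (nhds 0) := by
  obtain ⟨hσ0, hσ1⟩ := hσ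
  obtain ⟨⟨iQ, hiQ⟩, hlamQlb⟩ := hlamQ
  obtain ⟨⟨iP, hiP⟩, hlamPub⟩ := hlamP
  have hlamQle : ∀ i, lamQ ≤ hQ.1.eigenvalues i := fun i => hlamQlb ⟨i, rfl⟩
  have hlamPge : ∀ i, hP.1.eigenvalues i ≤ lamP := fun i => hlamPub ⟨i, rfl⟩
  have hlamQpos : 0 < lamQ := hiQ ▸ hQ.eigenvalues_pos iQ
  have hlamPpos : 0 < lamP := hiP ▸ hP.eigenvalues_pos iP
  -- the matrix BᵀPᵀPB is nonzero
  have hPt : Pᵀ = P := by rw [transpose_eq_conjTranspose]; exact hP.1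
  have hPB : P * B ≠ 0 := by
    intro h
    apply hB
    calc B = (P⁻¹ * P) * B := by
          rw [Matrix.nonsing_inv_mul P hP.det_pos.ne'.isUnit]; simp
    _ = P⁻¹ * (P * B) := by rw [Matrix.mul_assoc]
    _ = 0 := by rw [h, Matrix.mul_zero]
  have hCeq : Bᵀ * Pᵀ * P * B = (P * B)ᵀ * (P * B) := by
    rw [Matrix.transpose_mul]; rw [Matrix.mul_assoc, Matrix.mul_assoc]
  have hCne : Bᵀ * Pᵀ * P * B ≠ 0 := by
    rw [hCeq, transpose_eq_conjTranspose]
    exact fun h => hPB (Matrix.conjTranspose_mul_self_eq_zero.1 h)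
  have hKpos : 0 < opNorm (Bᵀ * Pᵀ * P * B) := opNorm_pos hCne
  set C := Bᵀ * Pᵀ * P * B with hC
  -- the Lyapunov function and its derivative
  set V : ℝ → ℝ := fun t => ⟪x t, matVec P (x t)⟫ with hV
  set W : ℝ → ℝ := fun t => ⟪x t, matVec P (matVec A (x t) + matVec B (e t))⟫ +
      ⟪matVec A (x t) + matVec B (e t), matVec P (x t)⟫ with hWdef
  have hV' : ∀ t, 0 ≤ t → HasDerivAt V (W t) t := by
    intro t ht
    have hPc : HasDerivAt (fun s => matVec P (x s))
        (matVec P (matVec A (x t) + matVec B (e t))) t := by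
      exact (LinearMap.toContinuousLinearMap (Matrix.toEuclideanLin P)).hasFDerivAt.comp_hasDerivAt
        t (hx t ht)
    exact (hx t ht).inner ℝ hPc
  -- pointwise derivative bound
  set Kc : ℝ := -((1 - σ) * lamQ / 2 / lamP) with hKc
  have hbound : ∀ t, 0 ≤ t → W t ≤ Kc * V t := by
    intro t ht
    set u := x t
    set w := e t
    -- rewrite W
    have e1 : ⟪matVec A u, matVec P u⟫ = ⟪u, matVec (Aᵀ * P) u⟫ := by
      rw [matVec_mul, ← inner_matVec_transpose Aᵀ u (matVec P u), Matrix.transpose_transpose]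
    have e2 : ⟪u, matVec P (matVec A u)⟫ = ⟪u, matVec (P * A) u⟫ := by rw [matVec_mul]
    have e3 : ⟪u, matVec (Aᵀ * P) u⟫ + ⟪u, matVec (P * A) u⟫ = -⟪u, matVec Q u⟫ := by
      rw [← inner_add_right]
      have : matVec (Aᵀ * P) u + matVec (P * A) u = matVec (Aᵀ * P + P * A) u := by
        simp [matVec, map_add]
      rw [this, hLyap]
      have : matVec (-Q) u = -(matVec Q u) := by simp [matVec, map_neg]
      rw [this, inner_neg_right]
    have e4 : ⟪u, matVec P (matVec B w)⟫ = ⟪u, matVec (P * B) w⟫ := by rw [matVec_mul]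
    have e5 : ⟪matVec B w, matVec P u⟫ = ⟪u, matVec (P * B) w⟫ := by
      rw [real_inner_comm, ← hPt, inner_matVec_transpose P u (matVec B w), hPt, ← matVec_mul]
    have hW : W t = -⟪u, matVec Q u⟫ + 2 * ⟪u, matVec (P * B) w⟫ := by
      have hsplit : W t = ⟪u, matVec P (matVec A u)⟫ + ⟪u, matVec P (matVec B w)⟫
          + (⟪matVec A u, matVec P u⟫ + ⟪matVec B w, matVec P u⟫) := by
        show ⟪u, matVec P (matVec A u + matVec B w)⟫
            + ⟪matVec A u + matVec B w, matVec P u⟫ = _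
        rw [matVec_add, inner_add_right, inner_add_left]
      rw [hsplit, e1, e2, e4, e5]
      linarith [e3]
    -- bounds
    have hQl : lamQ * ‖u‖ ^ 2 ≤ ⟪u, matVec Q u⟫ := rayleigh_lower hQ.1 hlamQle u
    have hPu : ⟪u, matVec P u⟫ ≤ lamP * ‖u‖ ^ 2 := rayleigh_upper hP.1 hlamPge u
    have hinn : ⟪u, matVec (P * B) w⟫ ≤ ‖u‖ * ‖matVec (P * B) w‖ := real_inner_le_norm _ _
    have hPBw : ‖matVec (P * B) w‖ ^ 2 ≤ opNorm C * ‖w‖ ^ 2 := by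
      have h1 : ‖matVec (P * B) w‖ ^ 2 = ⟪w, matVec C w⟫ := by
        rw [← real_inner_self_eq_norm_sq]
        calc ⟪matVec (P * B) w, matVec (P * B) w⟫
            = ⟪matVec ((P * B)ᵀ)ᵀ w, matVec (P * B) w⟫ := by rw [Matrix.transpose_transpose]
          _ = ⟪w, matVec (P * B)ᵀ (matVec (P * B) w)⟫ := inner_matVec_transpose _ _ _
          _ = ⟪w, matVec C w⟫ := by rw [← matVec_mul, ← hCeq]
      rw [h1]
      calc ⟪w, matVec C w⟫ ≤ ‖w‖ * ‖matVec C w‖ := real_inner_le_norm _ _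
        _ ≤ ‖w‖ * (opNorm C * ‖w‖) :=
            mul_le_mul_of_nonneg_left (norm_matVec_le _ _) (norm_nonneg _)
        _ = opNorm C * ‖w‖ ^ 2 := by ring
    have htr := htrig t ht
    have hwu : opNorm C * ‖w‖ ^ 2 ≤ σ * lamQ ^ 2 / 4 * ‖u‖ ^ 2 := by
      calc opNorm C * ‖w‖ ^ 2
          ≤ opNorm C * (σ * (lamQ ^ 2 / (4 * opNorm C)) * ‖u‖ ^ 2) :=
            mul_le_mul_of_nonneg_left htr hKpos.le
        _ = σ * lamQ ^ 2 / 4 * ‖u‖ ^ 2 := by field_simp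
    -- combine
    have hcross : 2 * ⟪u, matVec (P * B) w⟫ ≤ lamQ / 2 * ‖u‖ ^ 2
        + 2 / lamQ * ‖matVec (P * B) w‖ ^ 2 := by
      have key : lamQ / 2 * ‖u‖ ^ 2 + 2 / lamQ * ‖matVec (P * B) w‖ ^ 2
          - 2 * (‖u‖ * ‖matVec (P * B) w‖)
          = (lamQ * ‖u‖ - 2 * ‖matVec (P * B) w‖) ^ 2 / (2 * lamQ) := by
        field_simp; ring
      have hnn : 0 ≤ (lamQ * ‖u‖ - 2 * ‖matVec (P * B) w‖) ^ 2 / (2 * lamQ) :=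
        div_nonneg (sq_nonneg _) (by positivity)
      linarith [hinn]
    have hPB2 : 2 / lamQ * ‖matVec (P * B) w‖ ^ 2 ≤ σ * lamQ / 2 * ‖u‖ ^ 2 := by
      have h2 : ‖matVec (P * B) w‖ ^ 2 ≤ σ * lamQ ^ 2 / 4 * ‖u‖ ^ 2 := hPBw.trans hwu
      have h3 : 2 / lamQ * (σ * lamQ ^ 2 / 4 * ‖u‖ ^ 2) = σ * lamQ / 2 * ‖u‖ ^ 2 := by
        field_simp; ring
      calc 2 / lamQ * ‖matVec (P * B) w‖ ^ 2 ≤ 2 / lamQ * (σ * lamQ ^ 2 / 4 * ‖u‖ ^ 2) :=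
            mul_le_mul_of_nonneg_left h2 (by positivity)
        _ = σ * lamQ / 2 * ‖u‖ ^ 2 := h3
    have hstep : W t ≤ -((1 - σ) * lamQ / 2) * ‖u‖ ^ 2 := by
      have hid : -((1 - σ) * lamQ / 2) * ‖u‖ ^ 2
          = -(lamQ * ‖u‖ ^ 2) + lamQ / 2 * ‖u‖ ^ 2 + σ * lamQ / 2 * ‖u‖ ^ 2 := by ring
      rw [hW, hid]
      linarith [hQl, hcross, hPB2]
    have hVu : V t = ⟪u, matVec P u⟫ := rfl
    have hc1 : 0 ≤ (1 - σ) * lamQ / 2 := by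
      have h1σ : (0:ℝ) ≤ 1 - σ := by linarith
      positivity
    have hfin : -((1 - σ) * lamQ / 2) * ‖u‖ ^ 2 ≤ Kc * V t := by
      have h6 : V t ≤ lamP * ‖u‖ ^ 2 := hPu
      have h8 := mul_le_mul_of_nonneg_left h6 (div_nonneg hc1 hlamPpos.le)
      have h7 : (1 - σ) * lamQ / 2 / lamP * (lamP * ‖u‖ ^ 2)
          = (1 - σ) * lamQ / 2 * ‖u‖ ^ 2 := by
        field_simp
      rw [hKc]; linarith
    exact hstep.trans hfin
  -- Gronwall
  have hmain : ∀ t, 0 ≤ t → V t ≤ V 0 * Real.exp (-(1 - σ) * lamQ * t / (2 * lamP)) := by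
    intro t ht
    have hgr := le_gronwallBound_of_liminf_deriv_right_le (f := V) (f' := W)
      (δ := V 0) (K := Kc) (ε := 0) (a := 0) (b := t)
      (fun s hs => ((hV' s hs.1).continuousAt.continuousWithinAt))
      (fun s hs r hr => ((hV' s hs.1).hasDerivWithinAt.liminf_right_slope_le hr))
      le_rfl (fun s hs => by rw [add_zero]; exact hbound s hs.1)
      t ⟨ht, le_rfl⟩
    rw [gronwallBound_ε0] at hgr
    calc V t ≤ V 0 * Real.exp (Kc * (t - 0)) := hgr
      _ = V 0 * Real.exp (-(1 - σ) * lamQ * t / (2 * lamP)) := by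
          rw [hKc]; congr 1; field_simp; ring
  refine ⟨hmain, ?_⟩
  -- convergence to zero
  have hne : (Finset.univ : Finset (Fin N)).Nonempty := ⟨iP, Finset.mem_univ _⟩
  set μ : ℝ := Finset.univ.inf' hne hP.1.eigenvalues with hμ
  have hμpos : 0 < μ := by
    rw [hμ, Finset.lt_inf'_iff]
    exact fun i _ => hP.eigenvalues_pos i
  have hμle : ∀ i, μ ≤ hP.1.eigenvalues i := fun i => Finset.inf'_le _ (Finset.mem_univ i)
  set c : ℝ := (1 - σ) * lamQ / (2 * lamP) with hc
  have hcpos : 0 < c := by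
    rw [hc]
    have h1σ : (0:ℝ) < 1 - σ := by linarith
    positivity
  have hxb : ∀ t, 0 ≤ t → ‖x t‖ ^ 2 ≤ V 0 / μ * Real.exp (-(c * t)) := by
    intro t ht
    have h1 : μ * ‖x t‖ ^ 2 ≤ V t := rayleigh_lower hP.1 hμle (x t)
    have h2 := hmain t ht
    have h3 : -(1 - σ) * lamQ * t / (2 * lamP) = -(c * t) := by rw [hc]; field_simp
    rw [h3] at h2
    rw [div_mul_eq_mul_div, le_div_iff₀ hμpos]
    nlinarith [h1.trans h2]
  have hg0 : Tendsto (fun t => V 0 / μ * Real.exp (-(c * t))) atTop (nhds 0) := by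
    have h1 : Tendsto (fun t : ℝ => c * t) atTop atTop :=
      Tendsto.const_mul_atTop hcpos tendsto_id
    have h2 : Tendsto (fun t : ℝ => Real.exp (-(c * t))) atTop (nhds 0) :=
      Real.tendsto_exp_neg_atTop_nhds_zero.comp h1
    simpa using h2.const_mul (V 0 / μ)
  have hsq : Tendsto (fun t => ‖x t‖ ^ 2) atTop (nhds 0) := by
    apply squeeze_zero' (Eventually.of_forall fun t => sq_nonneg _)
      ((eventually_ge_atTop 0).mono fun t ht => hxb t ht) hg0
  have hnorm : Tendsto (fun t => ‖x t‖) atTop (nhds 0) := by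
    have h := (Real.continuous_sqrt.tendsto 0).comp hsq
    simp only [Function.comp_def, Real.sqrt_zero] at h
    convert h using 2 with t
    rw [Real.sqrt_sq (norm_nonneg _)]
  exact tendsto_zero_iff_norm_tendsto_zero.2 hnorm
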